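/- If ψ_r(λ) = (μ, ν) with μ_i = λ_i − r·ν_i and ν_i = Σ_{j≥i} ⌊(λ_j − λ_{j+1})/r⌋, then λ and μ have the same r-core. -/
import Mathlib


open MvPowerSeries

/-- `f` encodes a partition: weakly decreasing with finitely many nonzero parts.
`f i` is the `(i+1)`-st part `λ_{i+1}`. -/
def PartitionFun (f : ℕ → ℕ) : Prop :=
  (∀ i, f (i + 1) ≤ f i) ∧ ∃ N, ∀ i, N ≤ i → f i = 0

/-- The size `|λ|` of a partition. -/
noncomputable def psize (f : ℕ → ℕ) : ℕ := ∑ᶠ i, f i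

/-- `conj f j` is the number of parts of `f` that are `> j`, i.e. the conjugate part `λ'_{j+1}`. -/
noncomputable def conj (f : ℕ → ℕ) (j : ℕ) : ℕ := {i | j < f i}.ncard

/-- The hook length of the cell in row `i+1`, column `j+1`:
`h = λ_{i+1} + λ'_{j+1} - (i+1) - (j+1) + 1`. -/
noncomputable def hookLen (f : ℕ → ℕ) (i j : ℕ) : ℕ := f i + conj f j - i - j - 1

/-- The cell `(i+1, j+1)` is a bottom square: it lies in the diagram and has leg length 0,
i.e. `λ'_{j+1} = i + 1`. -/
noncomputable def bottomCell (f : ℕ → ℕ) (i j : ℕ) : Prop := j < f i ∧ conj f j = i + 1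

/-- `ν_i = Σ_{j ≥ i} ⌊(λ_j − λ_{j+1})/r⌋` (0-based indexing). -/
noncomputable def nuF (r : ℕ) (f : ℕ → ℕ) : ℕ → ℕ :=
  fun i => ∑ᶠ j, if i ≤ j then (f j - f (j + 1)) / r else 0

/-- `μ_i = λ_i − r·ν_i`. -/
noncomputable def muF (r : ℕ) (f : ℕ → ℕ) : ℕ → ℕ :=
  fun i => f i - r * nuF r f i

/-- An `r`-kernel: all successive part differences are `< r`. -/
def KernelFun (r : ℕ) (f : ℕ → ℕ) : Prop := ∀ i, f i - f (i + 1) < r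

/-- An `r`-core: no hook length is divisible by `r`. -/
noncomputable def RCoreFun (r : ℕ) (f : ℕ → ℕ) : Prop :=
  ∀ i j, j < f i → ¬ r ∣ hookLen f i j

/-- `f` and `g` have the same `r`-core, expressed via the abacus/β-number characterisation:
for some `N` beyond the lengths of both partitions, the multisets of residues mod `r` of the
β-numbers `{λ_i + N − i : 1 ≤ i ≤ N}` of the two partitions coincide. -/
def SameRCore (r : ℕ) (f g : ℕ → ℕ) : Prop :=
  ∃ N, (∀ i, N ≤ i → f i = 0) ∧ (∀ i, N ≤ i → g i = 0) ∧
    ∀ c, ((Finset.range N).filter fun i => (f i + N - i - 1) % r = c).card =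
         ((Finset.range N).filter fun i => (g i + N - i - 1) % r = c).card

/-- `|H_r(λ)|`: the number of cells of `λ` whose hook length is divisible by `r`. -/
noncomputable def hrCard (r : ℕ) (f : ℕ → ℕ) : ℕ :=
  {p : ℕ × ℕ | p.2 < f p.1 ∧ r ∣ hookLen f p.1 p.2}.ncard

/-- `|H^{(b)}_r(λ)|`: the number of bottom squares of `λ` whose hook length is divisible
by `r`. -/
noncomputable def botHrCard (r : ℕ) (f : ℕ → ℕ) : ℕ :=
  {p : ℕ × ℕ | bottomCell f p.1 p.2 ∧ r ∣ hookLen f p.1 p.2}.ncard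

lemma tele_le (f : ℕ → ℕ) (hmono : ∀ i, f (i + 1) ≤ f i) (i : ℕ) : ∀ N : ℕ,
    (∑ j ∈ Finset.range N, if i ≤ j then f j - f (j + 1) else 0) + f (max i N) ≤ f i := by
  intro N
  induction N with
  | zero => simp
  | succ N ih =>
    rw [Finset.sum_range_succ]
    by_cases h : i ≤ N
    · have hmax : max i (N + 1) = N + 1 := by omega
      have hmaxN : max i N = N := by omega
      rw [hmax, if_pos h]
      rw [hmaxN] at ih
      have := hmono N
      omega
    · have hmax : max i (N + 1) = i := by omega
      have hmaxN : max i N = i := by omega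
      rw [hmax, if_neg h]
      rw [hmaxN] at ih
      omega

lemma nuF_eq (r : ℕ) (f : ℕ → ℕ) (N : ℕ) (hN : ∀ i, N ≤ i → f i = 0) (i : ℕ) :
    nuF r f i = ∑ j ∈ Finset.range N, if i ≤ j then (f j - f (j + 1)) / r else 0 := by
  apply finsum_eq_finset_sum_of_support_subset
  intro j hj
  simp only [Function.mem_support] at hj
  simp only [Finset.coe_range, Set.mem_Iio]
  by_contra h
  push_neg at h
  rw [hN j h, hN (j + 1) (by omega)] at hj
  simp at hj

lemma r_nuF_le (r : ℕ) (f : ℕ → ℕ) (hf : PartitionFun f) (i : ℕ) :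
    r * nuF r f i ≤ f i := by
  obtain ⟨hmono, N, hN⟩ := hf
  rw [nuF_eq r f N hN i, Finset.mul_sum]
  calc (∑ j ∈ Finset.range N, r * if i ≤ j then (f j - f (j + 1)) / r else 0)
      ≤ ∑ j ∈ Finset.range N, if i ≤ j then f j - f (j + 1) else 0 := by
        apply Finset.sum_le_sum
        intro j _
        by_cases h : i ≤ j
        · simp only [if_pos h]
          rw [mul_comm]
          exact Nat.div_mul_le_self _ _
        · simp [h]
    _ ≤ f i := le_trans (Nat.le_add_right _ _) (tele_le f hmono i N)

/-- If `ψ_r(λ) = (μ, ν)` then `λ` and `μ` have the same `r`-core. -/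
theorem stmt9 (r : ℕ) (hr : 0 < r) (f : ℕ → ℕ) (hf : PartitionFun f) :
    SameRCore r f (muF r f) := by
  obtain ⟨hmono, N, hN⟩ := hf
  refine ⟨N, hN, fun i hi => ?_, fun c => ?_⟩
  · simp [muF, hN i hi]
  · congr 1
    apply Finset.filter_congr
    intro i hi
    simp only [Finset.mem_range] at hi
    have hle := r_nuF_le r f ⟨hmono, N, hN⟩ i
    have hmu : f i = muF r f i + r * nuF r f i := by simp only [muF]; omega
    rw [hmu]
    have h1 : muF r f i + r * nuF r f i + N - i - 1
        = muF r f i + N - i - 1 + r * nuF r f i := by omega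
    rw [h1, Nat.add_mul_mod_self_left]
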